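/- There exists a trifferent code of length 5 with cardinality 10 (for instance the 10 columns listed in Example 1: (0,0,0,0,0), (0,0,0,0,1), (0,1,1,1,2), (0,2,2,2,2), (1,0,2,1,2), (1,1,0,2,2), (1,2,1,0,2), (2,0,1,2,2), (2,1,2,0,2), (2,2,0,1,2)). -/

import Mathlib

set_option maxRecDepth 10000


def Trifferent {n : ℕ} (C : Finset (Fin n → Fin 3)) : Prop :=
  ∀ x ∈ C, ∀ y ∈ C, ∀ z ∈ C, x ≠ y → x ≠ z → y ≠ z →
    ∃ i : Fin n, x i ≠ y i ∧ x i ≠ z i ∧ y i ≠ z i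

set_option synthInstance.maxHeartbeats 400000 in
set_option synthInstance.maxSize 1024 in
theorem exists_trifferent_length_five_card_ten :
    ∃ C : Finset (Fin 5 → Fin 3), Trifferent C ∧ C.card = 10 := by
  use {![0,0,0,0,0], ![0,0,0,0,1], ![0,1,1,1,2], ![0,2,2,2,2], ![1,0,2,1,2],
       ![1,1,0,2,2], ![1,2,1,0,2], ![2,0,1,2,2], ![2,1,2,0,2], ![2,2,0,1,2]}
  constructor
  · unfold Trifferent
    decide
  · decide
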